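/- arXiv:1805.07491 — 3 statements merged into one kernel-verified Lean document; each statement's English description precedes it below -/
import Mathlib

section
/- Let T be a tight typing with T(∅) = T(A_in,out) = [0,0], and let A ⊎ B = A_in,out be a partition with T(A) defined and T(B) undefined. Then the minimum over P(T) of θ(B) equals −max T(A) and the maximum over P(T) of θ(B) equals −min T(A). Consequently, extending T by the assignment T'(B) := −T(A) yields a tight typing T' with P(T) = P(T'). -/
open Finset

namespace FlowTyping

noncomputable section

/-- A typing assigns (optionally) a closed interval `[r, s]` (encoded as a pair)
to subsets of the input/output arcs. -/
abbrev Typing (ι : Type*) := Finset ι → Option (ℝ × ℝ)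

variable {ι : Type*} [Fintype ι] [DecidableEq ι]

/-- `theta isIn A f` = sum of `f` over the input arcs in `A` minus the sum of `f`
over the output arcs in `A`. -/
def theta (isIn : ι → Bool) (A : Finset ι) (f : ι → ℝ) : ℝ :=
  ∑ a ∈ A, (if isIn a then f a else - f a)

/-- An IO assignment (a nonnegative function on the input/output arcs) satisfies a
typing `T` if for every subset `A` where `T A` is defined, `theta A f ∈ T A`. -/
def Satisfies (isIn : ι → Bool) (T : Typing ι) (f : ι → ℝ) : Prop :=
  (∀ a, 0 ≤ f a) ∧
    ∀ A r s, T A = some (r, s) → r ≤ theta isIn A f ∧ theta isIn A f ≤ s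

/-- The polytope of all IO assignments satisfying the typing `T`. -/
def Poly (isIn : ι → Bool) (T : Typing ι) : Set (ι → ℝ) := {f | Satisfies isIn T f}

/-- Well-formedness: every assigned interval is a genuine interval `[r, s]`, `r ≤ s`. -/
def WF (T : Typing ι) : Prop := ∀ A r s, T A = some (r, s) → r ≤ s

/-- A typing is total if it is defined on every subset of the input/output arcs. -/
def TotalT (T : Typing ι) : Prop := ∀ A, (T A).isSome

/-- A typing is tight if every value of every assigned interval is attained on the
polytope `Poly T`. -/
def Tight (isIn : ι → Bool) (T : Typing ι) : Prop :=
  ∀ A r s, T A = some (r, s) → ∀ x, r ≤ x → x ≤ s →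
    ∃ f ∈ Poly isIn T, theta isIn A f = x

/-- A flow network: a finite set of nodes `V`, a finite set of internal arcs `E`
(each with a source and a target node), input/output arcs indexed by `ι`
(each attached to a node; `isIn a` tells whether `a` is an input arc), and
lower/upper capacities on all arcs. -/
structure Network (ι : Type*) (isIn : ι → Bool) where
  V : Type
  E : Type
  [fintV : Fintype V]
  [fintE : Fintype E]
  [decV : DecidableEq V]
  src : E → V
  tgt : E → V
  ioNode : ι → V
  lcE : E → ℝ
  ucE : E → ℝ
  lcIO : ι → ℝ
  ucIO : ι → ℝ
  lcE_nonneg : ∀ e, 0 ≤ lcE e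
  lcE_le_ucE : ∀ e, lcE e ≤ ucE e
  lcIO_nonneg : ∀ a, 0 ≤ lcIO a
  lcIO_le_ucIO : ∀ a, lcIO a ≤ ucIO a

attribute [instance] Network.fintV Network.fintE Network.decV

variable {isIn : ι → Bool}

/-- `f` (on the io arcs) together with `g` (on the internal arcs) is a feasible
flow: capacity constraints on every arc, and flow conservation at every node. -/
def Network.Feasible (N : Network ι isIn) (f : ι → ℝ) (g : N.E → ℝ) : Prop :=
  (∀ a, N.lcIO a ≤ f a ∧ f a ≤ N.ucIO a) ∧
  (∀ e, N.lcE e ≤ g e ∧ g e ≤ N.ucE e) ∧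
  ∀ v : N.V,
    ((∑ e : N.E, if N.tgt e = v then g e else 0) +
        ∑ a : ι, if N.ioNode a = v ∧ isIn a then f a else 0) =
      ((∑ e : N.E, if N.src e = v then g e else 0) +
        ∑ a : ι, if N.ioNode a = v ∧ ¬ isIn a then f a else 0)

/-- A typing is sound for `N` if every IO assignment satisfying it extends to a
feasible flow in `N`. -/
def Sound (N : Network ι isIn) (T : Typing ι) : Prop :=
  ∀ f ∈ Poly isIn T, ∃ g : N.E → ℝ, N.Feasible f g

/-- A typing is complete for `N` if every feasible flow of `N` (restricted to the
io arcs) satisfies it. -/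
def Complete (N : Network ι isIn) (T : Typing ι) : Prop :=
  ∀ f g, N.Feasible f g → Satisfies isIn T f

/-- Undirected adjacency of nodes via internal arcs. -/
def NAdj (N : Network ι isIn) (v w : N.V) : Prop :=
  ∃ e : N.E, (N.src e = v ∧ N.tgt e = w) ∨ (N.src e = w ∧ N.tgt e = v)

/-- Two io arcs belong to the same (connected) component of the network. -/
def SameComp (N : Network ι isIn) (a b : ι) : Prop :=
  Relation.ReflTransGen (NAdj N) (N.ioNode a) (N.ioNode b)

/-- `T` is locally total for `N`: it is defined on every set of io arcs lying in a
single component, and undefined on every union of two nonempty sets of io arcs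
from two distinct components. -/
def LocallyTotal (N : Network ι isIn) (T : Typing ι) : Prop :=
  (∀ B : Finset ι, (∀ a ∈ B, ∀ b ∈ B, SameComp N a b) → (T B).isSome) ∧
  (∀ B B' : Finset ι, B.Nonempty → B'.Nonempty →
    (∀ a ∈ B, ∀ b ∈ B, SameComp N a b) →
    (∀ a ∈ B', ∀ b ∈ B', SameComp N a b) →
    (∀ a ∈ B, ∀ b ∈ B', ¬ SameComp N a b) → T (B ∪ B') = none)

/-- Principal typing: locally total, tight (and well-formed), sound and complete. -/
def PrincipalFor (N : Network ι isIn) (T : Typing ι) : Prop :=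
  WF T ∧ LocallyTotal N T ∧ Tight isIn T ∧ Sound N T ∧ Complete N T

/-- For a tight typing `T` with `T ∅ = T(A_in,out) = [0,0]` and a
partition `A ⊎ B = A_in,out` with `T A = [r,s]` defined and `T B` undefined:
the minimum of `θ(B)` over `P(T)` is `-s`, its maximum is `-r`, and extending `T`
by `T' B := [-s,-r]` yields a tight typing with the same polytope. -/
theorem extend_undefined_side {ι : Type*} [Fintype ι] [DecidableEq ι]
    (isIn : ι → Bool) (T : Typing ι) (hwf : WF T) (ht : Tight isIn T)
    (h0 : T ∅ = some (0, 0)) (hu : T Finset.univ = some (0, 0))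
    (A B : Finset ι) (hcover : A ∪ B = Finset.univ) (hdisj : Disjoint A B)
    (r s : ℝ) (hA : T A = some (r, s)) (hB : T B = none) :
    IsLeast {x | ∃ f ∈ Poly isIn T, theta isIn B f = x} (-s) ∧
    IsGreatest {x | ∃ f ∈ Poly isIn T, theta isIn B f = x} (-r) ∧
    Tight isIn (fun C => if C = B then some (-s, -r) else T C) ∧
    Poly isIn (fun C => if C = B then some (-s, -r) else T C) = Poly isIn T := by
  have hAB : A ≠ B := fun h => by rw [h, hB] at hA; exact Option.some_ne_none _ hA.symm
  have key : ∀ f ∈ Poly isIn T, theta isIn B f = - theta isIn A f := by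
    intro f hf
    have hu' := hf.2 Finset.univ 0 0 hu
    have hsum : theta isIn Finset.univ f = theta isIn A f + theta isIn B f := by
      rw [← hcover]; exact Finset.sum_union hdisj
    linarith [hu'.1, hu'.2]
  have hrs : r ≤ s := hwf A r s hA
  have hpoly : Poly isIn (fun C => if C = B then some (-s, -r) else T C) = Poly isIn T := by
    ext f
    constructor
    · rintro ⟨hnn, hc⟩
      refine ⟨hnn, fun C r' s' hC => ?_⟩
      have hCB : C ≠ B := fun h => by rw [h, hB] at hC; exact Option.some_ne_none _ hC.symm
      exact hc C r' s' (by simpa [hCB] using hC)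
    · rintro ⟨hnn, hc⟩
      refine ⟨hnn, fun C r' s' hC => ?_⟩
      by_cases h : C = B
      · subst h
        simp only [if_pos rfl] at hC
        obtain ⟨h1, h2⟩ := Prod.mk.injEq .. ▸ Option.some.inj hC
        have hAc := hc A r s hA
        have hBeq := key f ⟨hnn, hc⟩
        constructor <;> [linarith; linarith]
      · simp only [if_neg h] at hC; exact hc C r' s' hC
  refine ⟨⟨?_, ?_⟩, ⟨?_, ?_⟩, ?_, hpoly⟩
  · obtain ⟨f, hf, hfa⟩ := ht A r s hA s hrs le_rfl
    exact ⟨f, hf, by rw [key f hf, hfa]⟩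
  · rintro x ⟨f, hf, rfl⟩
    have := (hf.2 A r s hA).2
    rw [key f hf]; linarith
  · obtain ⟨f, hf, hfa⟩ := ht A r s hA r le_rfl hrs
    exact ⟨f, hf, by rw [key f hf, hfa]⟩
  · rintro x ⟨f, hf, rfl⟩
    have := (hf.2 A r s hA).1
    rw [key f hf]; linarith
  · intro C r' s' hC x hx1 hx2
    by_cases h : C = B
    · subst h
      simp only [if_pos rfl] at hC
      obtain ⟨h1, h2⟩ := Prod.mk.injEq .. ▸ Option.some.inj hC
      obtain ⟨f, hf, hfa⟩ := ht A r s hA (-x) (by linarith) (by linarith)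
      exact ⟨f, hpoly ▸ hf, by rw [key f hf, hfa]; ring⟩
    · simp only [if_neg h] at hC
      obtain ⟨f, hf, hfa⟩ := ht C r' s' hC x hx1 hx2
      exact ⟨f, hpoly ▸ hf, hfa⟩

end
end FlowTyping
end

section
/- Let T', T'' be principal typings for disjoint networks N', N''. Define the total parallel addition T'⊞T'' by (T'⊞T'')(A) := T'(A∩A'_in,out) + T''(A∩A''_in,out) for all A (with interval addition [r1,s1]+[r2,s2] = [r1+r2, s1+s2]) except (T'⊞T'')(∅) = (T'⊞T'')(A'∪A'') = [0,0]. Then T'⊞T'' is a tight, sound, and complete typing for N' ∥ N'', and it is total whenever T' and T'' are total. -/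
open Finset

namespace FlowTyping
set_option linter.unusedSectionVars false

noncomputable section

variable {ι : Type*} [Fintype ι] [DecidableEq ι]

variable {isIn : ι → Bool}

variable {ι κ : Type*} [Fintype ι] [DecidableEq ι] [Fintype κ] [DecidableEq κ]
variable {isIn : ι → Bool} {isIn' : κ → Bool}

/-- The parallel (disjoint) composition `N' ∥ N''` of two networks over disjoint
arc sets. -/
def parNetwork (N : Network ι isIn) (M : Network κ isIn') :
    Network (ι ⊕ κ) (Sum.elim isIn isIn') where
  V := N.V ⊕ M.V
  E := N.E ⊕ M.E
  fintV := inferInstance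
  fintE := inferInstance
  decV := inferInstance
  src := Sum.map N.src M.src
  tgt := Sum.map N.tgt M.tgt
  ioNode := Sum.map N.ioNode M.ioNode
  lcE := Sum.elim N.lcE M.lcE
  ucE := Sum.elim N.ucE M.ucE
  lcIO := Sum.elim N.lcIO M.lcIO
  ucIO := Sum.elim N.ucIO M.ucIO
  lcE_nonneg := by rintro (e | e); exacts [N.lcE_nonneg e, M.lcE_nonneg e]
  lcE_le_ucE := by rintro (e | e); exacts [N.lcE_le_ucE e, M.lcE_le_ucE e]
  lcIO_nonneg := by rintro (a | a); exacts [N.lcIO_nonneg a, M.lcIO_nonneg a]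
  lcIO_le_ucIO := by rintro (a | a); exacts [N.lcIO_le_ucIO a, M.lcIO_le_ucIO a]

/-- The left part of a finite set of arcs of the disjoint union. -/
def leftPart (A : Finset (ι ⊕ κ)) : Finset ι :=
  Finset.univ.filter (fun a => Sum.inl a ∈ A)

/-- The right part of a finite set of arcs of the disjoint union. -/
def rightPart (A : Finset (ι ⊕ κ)) : Finset κ :=
  Finset.univ.filter (fun b => Sum.inr b ∈ A)


/-- Minkowski sum of optional intervals (undefined if either is undefined). -/
def addI : Option (ℝ × ℝ) → Option (ℝ × ℝ) → Option (ℝ × ℝ)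
  | some (r1, s1), some (r2, s2) => some (r1 + r2, s1 + s2)
  | _, _ => none

/-- Total parallel addition `T' ⊞ T''` of typings over disjoint arc sets:
intervals of the two parts of each arc set are added. -/
def totAdd (T : Typing ι) (U : Typing κ) : Typing (ι ⊕ κ) := fun A =>
  if A = ∅ ∨ A = Finset.univ then some (0, 0)
  else addI (T (leftPart A)) (U (rightPart A))


/-! ### Auxiliary lemmas -/

lemma theta_empty (f : ι → ℝ) : theta isIn ∅ f = 0 := by simp [theta]

lemma leftPart_toLeft (A : Finset (ι ⊕ κ)) : leftPart A = A.toLeft := by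
  ext a; simp [leftPart]

lemma rightPart_toRight (A : Finset (ι ⊕ κ)) : rightPart A = A.toRight := by
  ext a; simp [rightPart]

lemma leftPart_univ : leftPart (Finset.univ : Finset (ι ⊕ κ)) = Finset.univ := by
  ext a; simp [leftPart]

lemma rightPart_univ : rightPart (Finset.univ : Finset (ι ⊕ κ)) = Finset.univ := by
  ext a; simp [rightPart]

lemma theta_split (A : Finset (ι ⊕ κ)) (f : ι ⊕ κ → ℝ) :
    theta (Sum.elim isIn isIn') A f
      = theta isIn (leftPart A) (fun a => f (Sum.inl a))
        + theta isIn' (rightPart A) (fun b => f (Sum.inr b)) := by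
  rw [leftPart_toLeft, rightPart_toRight]
  conv_lhs => rw [← Finset.toLeft_disjSum_toRight (u := A)]
  rw [theta, Finset.sum_disjSum]
  simp [theta]
  rfl

lemma sum_sum_ite_eq {V E : Type} [Fintype V] [Fintype E] [DecidableEq V]
    (h : E → V) (g : E → ℝ) :
    ∑ v, ∑ e, (if h e = v then g e else 0) = ∑ e, g e := by
  rw [Finset.sum_comm]; simp

lemma sum_sum_ite_and {V : Type} [Fintype V] [DecidableEq V]
    (h : ι → V) (p : ι → Prop) [DecidablePred p] (f : ι → ℝ) :
    ∑ v, ∑ a, (if h a = v ∧ p a then f a else 0) = ∑ a, if p a then f a else 0 := by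
  rw [Finset.sum_comm]
  refine Finset.sum_congr rfl fun a _ => ?_
  simp [ite_and]

lemma feasible_theta_univ {N : Network ι isIn} {f : ι → ℝ} {g : N.E → ℝ}
    (h : N.Feasible f g) : theta isIn Finset.univ f = 0 := by
  have key := Finset.sum_congr rfl (fun v (_ : v ∈ (Finset.univ : Finset N.V)) => h.2.2 v)
  simp only [Finset.sum_add_distrib] at key
  rw [sum_sum_ite_eq N.tgt g, sum_sum_ite_eq N.src g,
    sum_sum_ite_and N.ioNode (fun a => isIn a = true) f,
    sum_sum_ite_and N.ioNode (fun a => ¬ isIn a = true) f] at key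
  have hth : theta isIn Finset.univ f
      = (∑ a, if isIn a then f a else 0) - ∑ a, if ¬ isIn a = true then f a else 0 := by
    rw [← Finset.sum_sub_distrib]
    refine Finset.sum_congr rfl fun a _ => ?_
    by_cases h : isIn a <;> simp [h]
  rw [hth]; linarith

lemma sum_sum_type' {α β : Type*} [inst : Fintype (α ⊕ β)] [Fintype α] [Fintype β]
    (f : α ⊕ β → ℝ) :
    @Finset.sum _ _ _ (@Finset.univ _ inst) f = (∑ a, f (Sum.inl a)) + ∑ b, f (Sum.inr b) := by
  convert Fintype.sum_sum_type f

lemma parFeasible_iff (N : Network ι isIn) (M : Network κ isIn')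
    (f : ι ⊕ κ → ℝ) (g : N.E ⊕ M.E → ℝ) :
    (parNetwork N M).Feasible f g ↔
      N.Feasible (fun a => f (Sum.inl a)) (fun e => g (Sum.inl e))
        ∧ M.Feasible (fun b => f (Sum.inr b)) (fun e => g (Sum.inr e)) := by
  simp only [Network.Feasible, parNetwork, Sum.forall, Fintype.sum_sum_type,
    Sum.elim_inl, Sum.elim_inr, Sum.map_inl, Sum.map_inr, Sum.inl.injEq, Sum.inr.injEq,
    reduceCtorEq, false_and, if_false, and_false, Finset.sum_const_zero, add_zero, zero_add,
    if_neg, not_false_iff]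
  simp only [sum_sum_type' (inst := (parNetwork N M).fintE), Sum.map_inl, Sum.map_inr, Sum.inl.injEq, Sum.inr.injEq,
    reduceCtorEq, if_false, Finset.sum_const_zero, add_zero, zero_add]
  tauto

lemma principal_empty {N : Network ι isIn} {T : Typing ι} (hT : PrincipalFor N T) :
    T ∅ = some (0, 0) := by
  obtain ⟨hWF, hLT, hTight, _, _⟩ := hT
  have hs : (T ∅).isSome := hLT.1 ∅ (by simp)
  obtain ⟨⟨r, s⟩, hrs⟩ := Option.isSome_iff_exists.mp hs
  have hle := hWF _ _ _ hrs
  have hr : r = 0 := by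
    obtain ⟨f, _, hf⟩ := hTight _ _ _ hrs r le_rfl hle
    rw [theta_empty] at hf; linarith
  have hs0 : s = 0 := by
    obtain ⟨f, _, hf⟩ := hTight _ _ _ hrs s hle le_rfl
    rw [theta_empty] at hf; linarith
  rw [hrs, hr, hs0]

lemma principal_univ_zero {N : Network ι isIn} {T : Typing ι} (hT : PrincipalFor N T)
    {r s : ℝ} (h : T Finset.univ = some (r, s)) : r = 0 ∧ s = 0 := by
  obtain ⟨hWF, _, hTight, hSound, _⟩ := hT
  have hle := hWF _ _ _ h
  constructor
  · obtain ⟨f, hf, hth⟩ := hTight _ _ _ h r le_rfl hle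
    obtain ⟨g, hg⟩ := hSound f hf
    rw [feasible_theta_univ hg] at hth; exact hth.symm
  · obtain ⟨f, hf, hth⟩ := hTight _ _ _ h s hle le_rfl
    obtain ⟨g, hg⟩ := hSound f hf
    rw [feasible_theta_univ hg] at hth; exact hth.symm

lemma addI_eq_some {o1 o2 : Option (ℝ × ℝ)} {r s : ℝ} (h : addI o1 o2 = some (r, s)) :
    ∃ r1 s1 r2 s2, o1 = some (r1, s1) ∧ o2 = some (r2, s2) ∧ r = r1 + r2 ∧ s = s1 + s2 := by
  cases o1 with
  | none => cases o2 <;> simp [addI] at h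
  | some p1 =>
    cases o2 with
    | none => obtain ⟨r1, s1⟩ := p1; simp [addI] at h
    | some p2 =>
      obtain ⟨r1, s1⟩ := p1; obtain ⟨r2, s2⟩ := p2
      simp only [addI, Option.some.injEq, Prod.mk.injEq] at h
      exact ⟨r1, s1, r2, s2, rfl, rfl, h.1.symm, h.2.symm⟩

lemma interval_split {r1 s1 r2 s2 x : ℝ} (h1 : r1 ≤ s1) (h2 : r2 ≤ s2)
    (hl : r1 + r2 ≤ x) (hr : x ≤ s1 + s2) :
    ∃ x1 x2, x = x1 + x2 ∧ r1 ≤ x1 ∧ x1 ≤ s1 ∧ r2 ≤ x2 ∧ x2 ≤ s2 := by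
  refine ⟨max r1 (min s1 (x - r2)), x - max r1 (min s1 (x - r2)), by ring,
    le_max_left _ _, ?_, ?_, ?_⟩
  · exact max_le h1 (min_le_left _ _)
  · have : max r1 (min s1 (x - r2)) ≤ x - r2 :=
      max_le (by linarith) (min_le_right _ _)
    linarith
  · have : x - s2 ≤ max r1 (min s1 (x - r2)) :=
      le_trans (le_min (by linarith) (by linarith)) (le_max_right _ _)
    linarith

lemma totAdd_complete {N : Network ι isIn} {M : Network κ isIn'}
    {T : Typing ι} {U : Typing κ}
    (hTc : Complete N T) (hUc : Complete M U) :
    Complete (parNetwork N M) (totAdd T U) := by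
  intro f g hfg
  rw [parFeasible_iff N M f g] at hfg
  obtain ⟨hN, hM⟩ := hfg
  have hT' := hTc _ _ hN
  have hU' := hUc _ _ hM
  constructor
  · rintro (a | b); exacts [hT'.1 a, hU'.1 b]
  · intro A r s hA
    rw [totAdd] at hA
    split_ifs at hA with h
    · simp only [Option.some.injEq, Prod.mk.injEq] at hA
      obtain ⟨hr, hs⟩ := hA
      rcases h with rfl | rfl
      · rw [theta_empty, ← hr, ← hs]; exact ⟨le_rfl, le_rfl⟩
      · rw [theta_split, leftPart_univ, rightPart_univ,
          feasible_theta_univ hN, feasible_theta_univ hM, ← hr, ← hs]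
        norm_num
    · obtain ⟨r1, s1, r2, s2, hTL, hUR, rfl, rfl⟩ := addI_eq_some hA
      have b1 := hT'.2 _ _ _ hTL
      have b2 := hU'.2 _ _ _ hUR
      rw [theta_split]
      constructor <;> linarith [b1.1, b1.2, b2.1, b2.2]

lemma poly_totAdd_left {N : Network ι isIn} {M : Network κ isIn'}
    {T : Typing ι} {U : Typing κ}
    (hT : PrincipalFor N T) (hU : PrincipalFor M U) {f : ι ⊕ κ → ℝ}
    (hf : f ∈ Poly (Sum.elim isIn isIn') (totAdd T U)) :
    (fun a => f (Sum.inl a)) ∈ Poly isIn T := by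
  obtain ⟨hnn, hsat⟩ := hf
  refine ⟨fun a => hnn (Sum.inl a), ?_⟩
  intro B r s hB
  set A : Finset (ι ⊕ κ) := B.map ⟨Sum.inl, Sum.inl_injective⟩ with hAdef
  have hL : leftPart A = B := by ext a; simp [leftPart, hAdef]
  have hR : rightPart A = ∅ := by ext b; simp [rightPart, hAdef]
  by_cases hAe : A = ∅ ∨ A = Finset.univ
  · rcases hAe with hAe | hAe
    · have hBe : B = ∅ := by rw [hAe] at hL; simpa [leftPart] using hL.symm
      rw [hBe, principal_empty hT] at hB
      simp only [Option.some.injEq, Prod.mk.injEq] at hB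
      rw [hBe, theta_empty, ← hB.1, ← hB.2]
      exact ⟨le_rfl, le_rfl⟩
    · have hBu : B = Finset.univ := by rw [hAe, leftPart_univ] at hL; exact hL.symm
      have h0 := hsat A 0 0 (by rw [hAe, totAdd, if_pos (Or.inr rfl)])
      rw [theta_split, hL, hR, theta_empty, add_zero] at h0
      obtain ⟨hr0, hs0⟩ := principal_univ_zero hT (hBu ▸ hB)
      rw [hr0, hs0]
      exact h0
  · have h0 := hsat A r s ?goal
    · rw [theta_split, hL, hR, theta_empty, add_zero] at h0
      exact h0
    case goal =>
      rw [totAdd, if_neg hAe, hL, hR, hB, principal_empty hU]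
      simp [addI]

lemma poly_totAdd_right {N : Network ι isIn} {M : Network κ isIn'}
    {T : Typing ι} {U : Typing κ}
    (hT : PrincipalFor N T) (hU : PrincipalFor M U) {f : ι ⊕ κ → ℝ}
    (hf : f ∈ Poly (Sum.elim isIn isIn') (totAdd T U)) :
    (fun b => f (Sum.inr b)) ∈ Poly isIn' U := by
  obtain ⟨hnn, hsat⟩ := hf
  refine ⟨fun b => hnn (Sum.inr b), ?_⟩
  intro B r s hB
  set A : Finset (ι ⊕ κ) := B.map ⟨Sum.inr, Sum.inr_injective⟩ with hAdef
  have hL : leftPart A = ∅ := by ext a; simp [leftPart, hAdef]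
  have hR : rightPart A = B := by ext b; simp [rightPart, hAdef]
  by_cases hAe : A = ∅ ∨ A = Finset.univ
  · rcases hAe with hAe | hAe
    · have hBe : B = ∅ := by rw [hAe] at hR; simpa [rightPart] using hR.symm
      rw [hBe, principal_empty hU] at hB
      simp only [Option.some.injEq, Prod.mk.injEq] at hB
      rw [hBe, theta_empty, ← hB.1, ← hB.2]
      exact ⟨le_rfl, le_rfl⟩
    · have hBu : B = Finset.univ := by rw [hAe, rightPart_univ] at hR; exact hR.symm
      have h0 := hsat A 0 0 (by rw [hAe, totAdd, if_pos (Or.inr rfl)])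
      rw [theta_split, hL, hR, theta_empty, zero_add] at h0
      obtain ⟨hr0, hs0⟩ := principal_univ_zero hU (hBu ▸ hB)
      rw [hr0, hs0]
      exact h0
  · have h0 := hsat A r s ?goal
    · rw [theta_split, hL, hR, theta_empty, zero_add] at h0
      exact h0
    case goal =>
      rw [totAdd, if_neg hAe, hL, hR, hB, principal_empty hT]
      simp [addI]

lemma elim_mem_poly {N : Network ι isIn} {M : Network κ isIn'}
    {T : Typing ι} {U : Typing κ}
    (hT : PrincipalFor N T) (hU : PrincipalFor M U) {f1 : ι → ℝ} {f2 : κ → ℝ}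
    (h1 : f1 ∈ Poly isIn T) (h2 : f2 ∈ Poly isIn' U) :
    Sum.elim f1 f2 ∈ Poly (Sum.elim isIn isIn') (totAdd T U) := by
  obtain ⟨g1, hg1⟩ := hT.2.2.2.1 _ h1
  obtain ⟨g2, hg2⟩ := hU.2.2.2.1 _ h2
  exact totAdd_complete hT.2.2.2.2 hU.2.2.2.2 _ (Sum.elim g1 g2)
    ((parFeasible_iff N M _ _).mpr ⟨hg1, hg2⟩)

/-- The total parallel addition of principal typings for disjoint
networks is a tight, sound, and complete typing for `N' ∥ N''`; it is total
whenever the two given typings are. -/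
theorem totAdd_sound_complete_tight (N : Network ι isIn) (M : Network κ isIn')
    (T : Typing ι) (U : Typing κ)
    (hT : PrincipalFor N T) (hU : PrincipalFor M U) :
    Tight (Sum.elim isIn isIn') (totAdd T U) ∧
    Sound (parNetwork N M) (totAdd T U) ∧
    Complete (parNetwork N M) (totAdd T U) ∧
    (TotalT T → TotalT U → TotalT (totAdd T U)) := by
  refine ⟨?_, ?_, totAdd_complete hT.2.2.2.2 hU.2.2.2.2, ?_⟩
  · -- Tight
    intro A r s hA x hrx hxs
    rw [totAdd] at hA
    split_ifs at hA with h
    · simp only [Option.some.injEq, Prod.mk.injEq] at hA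
      obtain ⟨hr, hs⟩ := hA
      obtain ⟨f1, hf1, -⟩ := hT.2.2.1 _ _ _ (principal_empty hT) 0 le_rfl le_rfl
      obtain ⟨f2, hf2, -⟩ := hU.2.2.1 _ _ _ (principal_empty hU) 0 le_rfl le_rfl
      refine ⟨Sum.elim f1 f2, elim_mem_poly hT hU hf1 hf2, ?_⟩
      have hx : x = 0 := by rw [← hr] at hrx; rw [← hs] at hxs; linarith
      rcases h with rfl | rfl
      · rw [theta_empty, hx]
      · rw [theta_split, leftPart_univ, rightPart_univ, hx]
        obtain ⟨g1, hg1⟩ := hT.2.2.2.1 _ hf1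
        obtain ⟨g2, hg2⟩ := hU.2.2.2.1 _ hf2
        have e1 : theta isIn Finset.univ (fun a => Sum.elim f1 f2 (Sum.inl a)) = 0 :=
          feasible_theta_univ hg1
        have e2 : theta isIn' Finset.univ (fun b => Sum.elim f1 f2 (Sum.inr b)) = 0 :=
          feasible_theta_univ hg2
        rw [e1, e2, add_zero]
    · obtain ⟨r1, s1, r2, s2, hTL, hUR, rfl, rfl⟩ := addI_eq_some hA
      obtain ⟨x1, x2, hx, hr1, hs1, hr2, hs2⟩ :=
        interval_split (hT.1 _ _ _ hTL) (hU.1 _ _ _ hUR) hrx hxs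
      obtain ⟨f1, hf1, hth1⟩ := hT.2.2.1 _ _ _ hTL x1 hr1 hs1
      obtain ⟨f2, hf2, hth2⟩ := hU.2.2.1 _ _ _ hUR x2 hr2 hs2
      refine ⟨Sum.elim f1 f2, elim_mem_poly hT hU hf1 hf2, ?_⟩
      rw [theta_split, hx]
      have e1 : theta isIn (leftPart A) (fun a => Sum.elim f1 f2 (Sum.inl a)) = x1 := hth1
      have e2 : theta isIn' (rightPart A) (fun b => Sum.elim f1 f2 (Sum.inr b)) = x2 := hth2
      rw [e1, e2]
  · -- Sound
    intro f hf
    obtain ⟨g1, hg1⟩ := hT.2.2.2.1 _ (poly_totAdd_left hT hU hf)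
    obtain ⟨g2, hg2⟩ := hU.2.2.2.1 _ (poly_totAdd_right hT hU hf)
    exact ⟨Sum.elim g1 g2, (parFeasible_iff N M f _).mpr ⟨hg1, hg2⟩⟩
  · -- Total
    intro hTt hUt A
    rw [totAdd]
    split_ifs with h
    · rfl
    · obtain ⟨⟨r1, s1⟩, e1⟩ := Option.isSome_iff_exists.mp (hTt (leftPart A))
      obtain ⟨⟨r2, s2⟩, e2⟩ := Option.isSome_iff_exists.mp (hUt (rightPart A))
      rw [e1, e2]; rfl


end
end FlowTyping
end

section
/- Strong subtyping is a partial order refining subtyping: for principal typings S, T, U over the same A_in,out, (1) T ≪: T; (2) if T ≪: U and U ≪: T then T = U; (3) if S ≪: T and T ≪: U then S ≪: U; and (4) T ≪: U implies T <: U, but the converse fails in general. -/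
open Finset

namespace FlowTyping

noncomputable section

variable {ι : Type*} [Fintype ι] [DecidableEq ι]

variable {isIn : ι → Bool}

variable {ι : Type*} [Fintype ι] [DecidableEq ι]

/-- A principal typing over a fixed arc set: tight, total (well-formed), and
sound-and-complete for some network with that boundary. -/
def IsPrincipal (isIn : ι → Bool) (T : Typing ι) : Prop :=
  WF T ∧ TotalT T ∧ Tight isIn T ∧
    ∃ N : Network ι isIn, Sound N T ∧ Complete N T

/-- Subtyping: `U <: T` iff `P(U) ⊇ P(T)`. -/
def SubT (isIn : ι → Bool) (U T : Typing ι) : Prop :=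
  Poly isIn T ⊆ Poly isIn U

/-- Restriction of a typing to subsets of a given set `P` of arcs. -/
def restrictTo (P : Finset ι) (T : Typing ι) : Typing ι := fun A =>
  if A ⊆ P then T A else none

/-- The set of input arcs. -/
def inputs (isIn : ι → Bool) : Finset ι := Finset.univ.filter (fun a => isIn a)

/-- The set of output arcs. -/
def outputs (isIn : ι → Bool) : Finset ι := Finset.univ.filter (fun a => ¬ isIn a)

/-- `T` is input-safe for `U`: every (nonnegative) IO assignment whose input part
satisfies the restriction of `T` to input subsets satisfies `T` iff it
satisfies `U`. -/
def InputSafe (isIn : ι → Bool) (T U : Typing ι) : Prop :=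
  ∀ g : ι → ℝ, Satisfies isIn (restrictTo (inputs isIn) T) g →
    (Satisfies isIn T g ↔ Satisfies isIn U g)

/-- `T` is output-safe for `U`: symmetric condition on the output side. -/
def OutputSafe (isIn : ι → Bool) (T U : Typing ι) : Prop :=
  ∀ g : ι → ℝ, Satisfies isIn (restrictTo (outputs isIn) T) g →
    (Satisfies isIn T g ↔ Satisfies isIn U g)

/-- Strong subtyping: `U ≪: T` iff `T` is both input-safe and output-safe for `U`. -/
def StrongSubT (isIn : ι → Bool) (U T : Typing ι) : Prop :=
  InputSafe isIn T U ∧ OutputSafe isIn T U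

/-! ### Auxiliary lemmas for the partial-order properties -/

lemma sat_restrict {isIn : ι → Bool} {T : Typing ι} {g : ι → ℝ} (P : Finset ι)
    (h : Satisfies isIn T g) : Satisfies isIn (restrictTo P T) g := by
  refine ⟨h.1, fun A r s hA => ?_⟩
  rw [restrictTo] at hA
  by_cases hAP : A ⊆ P
  · exact h.2 A r s (by rwa [if_pos hAP] at hA)
  · rw [if_neg hAP] at hA; cases hA

lemma subT_of_strongSubT {isIn : ι → Bool} {T U : Typing ι}
    (h : StrongSubT isIn T U) : SubT isIn T U := by
  intro f hf
  exact (h.1 f (sat_restrict _ hf)).mp hf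

lemma sat_restrict_of_poly_subset {isIn : ι → Bool} {T U : Typing ι}
    (hTightU : Tight isIn U) (hTotU : TotalT U)
    (hsub : Poly isIn U ⊆ Poly isIn T) (P : Finset ι) (g : ι → ℝ)
    (hg : Satisfies isIn (restrictTo P U) g) :
    Satisfies isIn (restrictTo P T) g := by
  refine ⟨hg.1, fun A rT sT hA => ?_⟩
  rw [restrictTo] at hA
  by_cases hAP : A ⊆ P
  · rw [if_pos hAP] at hA
    obtain ⟨⟨rU, sU⟩, hU⟩ := Option.isSome_iff_exists.mp (hTotU A)
    have hgU := hg.2 A rU sU (by rw [restrictTo, if_pos hAP, hU])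
    obtain ⟨f, hfU, hfθ⟩ := hTightU A rU sU hU (theta isIn A g) hgU.1 hgU.2
    have hb := (hsub hfU).2 A rT sT hA
    rw [hfθ] at hb; exact hb
  · rw [if_neg hAP] at hA; cases hA

/-! ### The counterexample: two principal typings on four arcs -/

/-- Arcs `0, 1` are inputs, arcs `2, 3` are outputs. -/
def isIn4ex : Fin 4 → Bool := fun a => decide (a.val < 2)

/-- Real-valued indicator of membership. -/
def indR (A : Finset (Fin 4)) (i : Fin 4) : ℝ := if i ∈ A then 1 else 0

lemma indR_cases (A : Finset (Fin 4)) (i : Fin 4) : indR A i = 0 ∨ indR A i = 1 := by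
  rw [indR]; split_ifs <;> simp

/-- Principal typing of the one-node network with all four arcs, capacities `[0,1]`. -/
def Tex : Typing (Fin 4) := fun A =>
  some (-(min (indR A 2 + indR A 3) (2 - (indR A 0 + indR A 1))),
        min (indR A 0 + indR A 1) (2 - (indR A 2 + indR A 3)))

/-- Principal typing of the two-node network with arcs `0,2` on one node and
`1,3` on the other, capacities `[0,1]`. -/
def Uex : Typing (Fin 4) := fun A =>
  some (min (indR A 0 - indR A 2) 0 + min (indR A 1 - indR A 3) 0,
        max (indR A 0 - indR A 2) 0 + max (indR A 1 - indR A 3) 0)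

lemma theta_ex (A : Finset (Fin 4)) (f : Fin 4 → ℝ) :
    theta isIn4ex A f =
      indR A 0 * f 0 + indR A 1 * f 1 - indR A 2 * f 2 - indR A 3 * f 3 := by
  have h : theta isIn4ex A f
      = ∑ a : Fin 4, if a ∈ A then (if isIn4ex a then f a else -f a) else 0 := by
    rw [theta, Finset.sum_ite_mem, Finset.univ_inter]
  rw [h, Fin.sum_univ_four]
  have h0 : isIn4ex 0 = true := by decide
  have h1 : isIn4ex 1 = true := by decide
  have h2 : isIn4ex 2 = false := by decide
  have h3 : isIn4ex 3 = false := by decide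
  rw [h0, h1, h2, h3]
  simp only [if_true, if_false, Bool.false_eq_true, indR]
  split_ifs <;> ring

/-- The polytope of `Tex`, described directly. -/
def CTex (f : Fin 4 → ℝ) : Prop :=
  (∀ i, 0 ≤ f i ∧ f i ≤ 1) ∧ f 0 + f 1 = f 2 + f 3

/-- The polytope of `Uex`, described directly. -/
def CUex (f : Fin 4 → ℝ) : Prop :=
  (∀ i, 0 ≤ f i ∧ f i ≤ 1) ∧ f 0 = f 2 ∧ f 1 = f 3

lemma satTex_of_CT {f : Fin 4 → ℝ} (h : CTex f) : Satisfies isIn4ex Tex f := by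
  refine ⟨fun a => (h.1 a).1, fun A r s hA => ?_⟩
  simp only [Tex, Option.some.injEq, Prod.mk.injEq] at hA
  obtain ⟨rfl, rfl⟩ := hA
  have h0 := h.1 0; have h1 := h.1 1; have h2 := h.1 2; have h3 := h.1 3
  have hbal := h.2
  rw [theta_ex]
  rcases indR_cases A 0 with e0 | e0 <;> rcases indR_cases A 1 with e1 | e1 <;>
    rcases indR_cases A 2 with e2 | e2 <;> rcases indR_cases A 3 with e3 | e3 <;>
    rw [e0, e1, e2, e3] <;> norm_num <;>
    constructor <;>
    linarith [h0.1, h0.2, h1.1, h1.2, h2.1, h2.2, h3.1, h3.2]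

lemma min_max_mul_bound {c f : ℝ} (h0 : 0 ≤ f) (h1 : f ≤ 1) :
    min c 0 ≤ c * f ∧ c * f ≤ max c 0 := by
  rcases le_total c 0 with hc | hc
  · exact ⟨by rw [min_eq_left hc]; nlinarith, by rw [max_eq_right hc]; nlinarith⟩
  · exact ⟨by rw [min_eq_right hc]; nlinarith, by rw [max_eq_left hc]; nlinarith⟩

lemma satUex_of_CU {f : Fin 4 → ℝ} (h : CUex f) : Satisfies isIn4ex Uex f := by
  refine ⟨fun a => (h.1 a).1, fun A r s hA => ?_⟩
  simp only [Uex, Option.some.injEq, Prod.mk.injEq] at hA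
  obtain ⟨rfl, rfl⟩ := hA
  have B0 := min_max_mul_bound (c := indR A 0 - indR A 2) (h.1 0).1 (h.1 0).2
  have B1 := min_max_mul_bound (c := indR A 1 - indR A 3) (h.1 1).1 (h.1 1).2
  rw [theta_ex, ← h.2.1, ← h.2.2]
  constructor <;> nlinarith [B0.1, B0.2, B1.1, B1.2]

lemma CT_of_satTex {f : Fin 4 → ℝ} (h : Satisfies isIn4ex Tex f) : CTex f := by
  have k0 := h.2 {0} 0 1 (by norm_num (config := { decide := true }) [Tex, indR])
  have k1 := h.2 {1} 0 1 (by norm_num (config := { decide := true }) [Tex, indR])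
  have k2 := h.2 {2} (-1) 0 (by norm_num (config := { decide := true }) [Tex, indR])
  have k3 := h.2 {3} (-1) 0 (by norm_num (config := { decide := true }) [Tex, indR])
  have kb := h.2 Finset.univ 0 0 (by norm_num (config := { decide := true }) [Tex, indR])
  rw [theta_ex] at k0 k1 k2 k3 kb
  norm_num (config := { decide := true }) [indR] at k0 k1 k2 k3 kb
  refine ⟨fun i => ?_, by linarith [kb.1, kb.2]⟩
  fin_cases i
  · exact k0
  · exact k1
  · exact ⟨k2.2, k2.1⟩
  · exact ⟨k3.2, k3.1⟩

lemma CU_of_satUex {f : Fin 4 → ℝ} (h : Satisfies isIn4ex Uex f) : CUex f := by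
  have k0 := h.2 {0} 0 1 (by norm_num (config := { decide := true }) [Uex, indR])
  have k1 := h.2 {1} 0 1 (by norm_num (config := { decide := true }) [Uex, indR])
  have k2 := h.2 {2} (-1) 0 (by norm_num (config := { decide := true }) [Uex, indR])
  have k3 := h.2 {3} (-1) 0 (by norm_num (config := { decide := true }) [Uex, indR])
  have ka := h.2 {0, 2} 0 0 (by norm_num (config := { decide := true }) [Uex, indR])
  have kb := h.2 {1, 3} 0 0 (by norm_num (config := { decide := true }) [Uex, indR])
  rw [theta_ex] at k0 k1 k2 k3 ka kb
  norm_num (config := { decide := true }) [indR] at k0 k1 k2 k3 ka kb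
  refine ⟨fun i => ?_, by linarith [ka.1, ka.2], by linarith [kb.1, kb.2]⟩
  fin_cases i
  · exact k0
  · exact k1
  · exact ⟨k2.2, k2.1⟩
  · exact ⟨k3.2, k3.1⟩

lemma mem_polyTex {f : Fin 4 → ℝ} : f ∈ Poly isIn4ex Tex ↔ CTex f :=
  ⟨CT_of_satTex, satTex_of_CT⟩

lemma mem_polyUex {f : Fin 4 → ℝ} : f ∈ Poly isIn4ex Uex ↔ CUex f :=
  ⟨CU_of_satUex, satUex_of_CU⟩

/-! ### Tightness of the example typings -/

lemma theta_interp (A : Finset (Fin 4)) (t : ℝ) (f g : Fin 4 → ℝ) :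
    theta isIn4ex A (fun i => (1 - t) * f i + t * g i)
      = (1 - t) * theta isIn4ex A f + t * theta isIn4ex A g := by
  rw [theta_ex, theta_ex, theta_ex]; ring

lemma CTex_convex (f g : Fin 4 → ℝ) (t : ℝ) (h0 : 0 ≤ t) (h1 : t ≤ 1)
    (hf : CTex f) (hg : CTex g) : CTex (fun i => (1 - t) * f i + t * g i) := by
  refine ⟨fun i => ⟨?_, ?_⟩, ?_⟩
  · show 0 ≤ (1 - t) * f i + t * g i
    nlinarith [(hf.1 i).1, (hg.1 i).1]
  · show (1 - t) * f i + t * g i ≤ 1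
    nlinarith [(hf.1 i).2, (hg.1 i).2]
  · simp only
    linear_combination (1 - t) * hf.2 + t * hg.2

lemma CUex_convex (f g : Fin 4 → ℝ) (t : ℝ) (h0 : 0 ≤ t) (h1 : t ≤ 1)
    (hf : CUex f) (hg : CUex g) : CUex (fun i => (1 - t) * f i + t * g i) := by
  refine ⟨fun i => ⟨?_, ?_⟩, ?_, ?_⟩
  · show 0 ≤ (1 - t) * f i + t * g i
    nlinarith [(hf.1 i).1, (hg.1 i).1]
  · show (1 - t) * f i + t * g i ≤ 1
    nlinarith [(hf.1 i).2, (hg.1 i).2]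
  · simp only; linear_combination (1 - t) * hf.2.1 + t * hg.2.1
  · simp only; linear_combination (1 - t) * hf.2.2 + t * hg.2.2

lemma tight_case_aux {X : Typing (Fin 4)} {C : (Fin 4 → ℝ) → Prop}
    (hCsat : ∀ f, C f → Satisfies isIn4ex X f)
    (hconv : ∀ f g t, 0 ≤ t → t ≤ 1 → C f → C g →
      C (fun i => (1 - t) * f i + t * g i))
    (A : Finset (Fin 4)) (x : ℝ) (flo fhi : Fin 4 → ℝ)
    (h1 : C flo) (h2 : C fhi)
    (hx : theta isIn4ex A flo ≤ x) (hx' : x ≤ theta isIn4ex A fhi) :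
    ∃ f ∈ Poly isIn4ex X, theta isIn4ex A f = x := by
  rcases eq_or_lt_of_le (le_trans hx hx') with h | h
  · exact ⟨flo, hCsat flo h1, by linarith⟩
  · set r := theta isIn4ex A flo with hr
    set s := theta isIn4ex A fhi with hs
    set t := (x - r) / (s - r) with ht
    have h0t : 0 ≤ t := div_nonneg (by linarith) (by linarith)
    have ht1 : t ≤ 1 := (div_le_one (by linarith)).mpr (by linarith)
    refine ⟨_, hCsat _ (hconv flo fhi t h0t ht1 h1 h2), ?_⟩
    rw [theta_interp, ← hr, ← hs]
    have hts : t * (s - r) = x - r := by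
      rw [ht]; exact div_mul_cancel₀ _ (sub_ne_zero.mpr (ne_of_gt h))
    linear_combination hts

/-- The zero assignment and five vertex assignments of the polytopes. -/
def wz : Fin 4 → ℝ := fun _ => 0
def w1 : Fin 4 → ℝ := ![1, 0, 1, 0]
def w2 : Fin 4 → ℝ := ![0, 1, 0, 1]
def w3 : Fin 4 → ℝ := ![1, 1, 1, 1]
def w4 : Fin 4 → ℝ := ![0, 1, 1, 0]
def w5 : Fin 4 → ℝ := ![1, 0, 0, 1]

lemma CT_wz : CTex wz := ⟨fun i => by norm_num [wz], by norm_num [wz]⟩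
lemma CT_w1 : CTex w1 :=
  ⟨fun i => by fin_cases i <;> norm_num [w1, Matrix.cons_val_two, Matrix.cons_val_three], by norm_num [w1, Matrix.cons_val_two, Matrix.cons_val_three]⟩
lemma CT_w2 : CTex w2 :=
  ⟨fun i => by fin_cases i <;> norm_num [w2, Matrix.cons_val_two, Matrix.cons_val_three], by norm_num [w2, Matrix.cons_val_two, Matrix.cons_val_three]⟩
lemma CT_w3 : CTex w3 :=
  ⟨fun i => by fin_cases i <;> norm_num [w3, Matrix.cons_val_two, Matrix.cons_val_three], by norm_num [w3, Matrix.cons_val_two, Matrix.cons_val_three]⟩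
lemma CT_w4 : CTex w4 :=
  ⟨fun i => by fin_cases i <;> norm_num [w4, Matrix.cons_val_two, Matrix.cons_val_three], by norm_num [w4, Matrix.cons_val_two, Matrix.cons_val_three]⟩
lemma CT_w5 : CTex w5 :=
  ⟨fun i => by fin_cases i <;> norm_num [w5, Matrix.cons_val_two, Matrix.cons_val_three], by norm_num [w5, Matrix.cons_val_two, Matrix.cons_val_three]⟩
lemma CU_wz : CUex wz := ⟨fun i => by norm_num [wz], by norm_num [wz], by norm_num [wz]⟩
lemma CU_w1 : CUex w1 :=
  ⟨fun i => by fin_cases i <;> norm_num [w1, Matrix.cons_val_two, Matrix.cons_val_three], by norm_num [w1, Matrix.cons_val_two, Matrix.cons_val_three], by norm_num [w1, Matrix.cons_val_two, Matrix.cons_val_three]⟩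
lemma CU_w2 : CUex w2 :=
  ⟨fun i => by fin_cases i <;> norm_num [w2, Matrix.cons_val_two, Matrix.cons_val_three], by norm_num [w2, Matrix.cons_val_two, Matrix.cons_val_three], by norm_num [w2, Matrix.cons_val_two, Matrix.cons_val_three]⟩
lemma CU_w3 : CUex w3 :=
  ⟨fun i => by fin_cases i <;> norm_num [w3, Matrix.cons_val_two, Matrix.cons_val_three], by norm_num [w3, Matrix.cons_val_two, Matrix.cons_val_three], by norm_num [w3, Matrix.cons_val_two, Matrix.cons_val_three]⟩

lemma theta_wz (A : Finset (Fin 4)) : theta isIn4ex A wz = 0 := by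
  rw [theta_ex]; norm_num [wz]
lemma theta_w1 (A : Finset (Fin 4)) :
    theta isIn4ex A w1 = indR A 0 - indR A 2 := by
  rw [theta_ex]; norm_num [w1, Matrix.cons_val_two, Matrix.cons_val_three]
lemma theta_w2 (A : Finset (Fin 4)) :
    theta isIn4ex A w2 = indR A 1 - indR A 3 := by
  rw [theta_ex]; norm_num [w2, Matrix.cons_val_two, Matrix.cons_val_three]
lemma theta_w3 (A : Finset (Fin 4)) :
    theta isIn4ex A w3 = indR A 0 + indR A 1 - indR A 2 - indR A 3 := by
  rw [theta_ex]; norm_num [w3, Matrix.cons_val_two, Matrix.cons_val_three]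
lemma theta_w4 (A : Finset (Fin 4)) :
    theta isIn4ex A w4 = indR A 1 - indR A 2 := by
  rw [theta_ex]; norm_num [w4, Matrix.cons_val_two, Matrix.cons_val_three]
lemma theta_w5 (A : Finset (Fin 4)) :
    theta isIn4ex A w5 = indR A 0 - indR A 3 := by
  rw [theta_ex]; norm_num [w5, Matrix.cons_val_two, Matrix.cons_val_three]

lemma tight_Tex : Tight isIn4ex Tex := by
  intro A r s hA x hxr hxs
  simp only [Tex, Option.some.injEq, Prod.mk.injEq] at hA
  obtain ⟨rfl, rfl⟩ := hA
  have key := tight_case_aux (X := Tex) (fun f hf => satTex_of_CT hf) CTex_convex A x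
  rcases indR_cases A 0 with e0 | e0 <;> rcases indR_cases A 1 with e1 | e1 <;>
    rcases indR_cases A 2 with e2 | e2 <;> rcases indR_cases A 3 with e3 | e3 <;>
    rw [e0, e1, e2, e3] at hxr hxs <;> norm_num at hxr hxs
  · exact key wz wz CT_wz CT_wz (by rw [theta_wz]; linarith) (by rw [theta_wz]; linarith)
  · exact key w2 wz CT_w2 CT_wz (by rw [theta_w2, e1, e3]; linarith) (by rw [theta_wz]; linarith)
  · exact key w1 wz CT_w1 CT_wz (by rw [theta_w1, e0, e2]; linarith) (by rw [theta_wz]; linarith)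
  · exact key w3 wz CT_w3 CT_wz (by rw [theta_w3, e0, e1, e2, e3]; linarith) (by rw [theta_wz]; linarith)
  · exact key wz w2 CT_wz CT_w2 (by rw [theta_wz]; linarith) (by rw [theta_w2, e1, e3]; linarith)
  · exact key w5 w4 CT_w5 CT_w4 (by rw [theta_w5, e0, e3]; linarith) (by rw [theta_w4, e1, e2]; linarith)
  · exact key w1 w2 CT_w1 CT_w2 (by rw [theta_w1, e0, e2]; linarith) (by rw [theta_w2, e1, e3]; linarith)
  · exact key w1 wz CT_w1 CT_wz (by rw [theta_w1, e0, e2]; linarith) (by rw [theta_wz]; linarith)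
  · exact key wz w1 CT_wz CT_w1 (by rw [theta_wz]; linarith) (by rw [theta_w1, e0, e2]; linarith)
  · exact key w2 w1 CT_w2 CT_w1 (by rw [theta_w2, e1, e3]; linarith) (by rw [theta_w1, e0, e2]; linarith)
  · exact key w4 w5 CT_w4 CT_w5 (by rw [theta_w4, e1, e2]; linarith) (by rw [theta_w5, e0, e3]; linarith)
  · exact key w2 wz CT_w2 CT_wz (by rw [theta_w2, e1, e3]; linarith) (by rw [theta_wz]; linarith)
  · exact key wz w3 CT_wz CT_w3 (by rw [theta_wz]; linarith) (by rw [theta_w3, e0, e1, e2, e3]; linarith)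
  · exact key wz w1 CT_wz CT_w1 (by rw [theta_wz]; linarith) (by rw [theta_w1, e0, e2]; linarith)
  · exact key wz w2 CT_wz CT_w2 (by rw [theta_wz]; linarith) (by rw [theta_w2, e1, e3]; linarith)
  · exact key wz wz CT_wz CT_wz (by rw [theta_wz]; linarith) (by rw [theta_wz]; linarith)

lemma tight_Uex : Tight isIn4ex Uex := by
  intro A r s hA x hxr hxs
  simp only [Uex, Option.some.injEq, Prod.mk.injEq] at hA
  obtain ⟨rfl, rfl⟩ := hA
  have key := tight_case_aux (X := Uex) (fun f hf => satUex_of_CU hf) CUex_convex A x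
  rcases indR_cases A 0 with e0 | e0 <;> rcases indR_cases A 1 with e1 | e1 <;>
    rcases indR_cases A 2 with e2 | e2 <;> rcases indR_cases A 3 with e3 | e3 <;>
    rw [e0, e1, e2, e3] at hxr hxs <;> norm_num at hxr hxs
  · exact key wz wz CU_wz CU_wz (by rw [theta_wz]; linarith) (by rw [theta_wz]; linarith)
  · exact key w2 wz CU_w2 CU_wz (by rw [theta_w2, e1, e3]; linarith) (by rw [theta_wz]; linarith)
  · exact key w1 wz CU_w1 CU_wz (by rw [theta_w1, e0, e2]; linarith) (by rw [theta_wz]; linarith)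
  · exact key w3 wz CU_w3 CU_wz (by rw [theta_w3, e0, e1, e2, e3]; linarith) (by rw [theta_wz]; linarith)
  · exact key wz w2 CU_wz CU_w2 (by rw [theta_wz]; linarith) (by rw [theta_w2, e1, e3]; linarith)
  · exact key wz wz CU_wz CU_wz (by rw [theta_wz]; linarith) (by rw [theta_wz]; linarith)
  · exact key w1 w2 CU_w1 CU_w2 (by rw [theta_w1, e0, e2]; linarith) (by rw [theta_w2, e1, e3]; linarith)
  · exact key w1 wz CU_w1 CU_wz (by rw [theta_w1, e0, e2]; linarith) (by rw [theta_wz]; linarith)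
  · exact key wz w1 CU_wz CU_w1 (by rw [theta_wz]; linarith) (by rw [theta_w1, e0, e2]; linarith)
  · exact key w2 w1 CU_w2 CU_w1 (by rw [theta_w2, e1, e3]; linarith) (by rw [theta_w1, e0, e2]; linarith)
  · exact key wz wz CU_wz CU_wz (by rw [theta_wz]; linarith) (by rw [theta_wz]; linarith)
  · exact key w2 wz CU_w2 CU_wz (by rw [theta_w2, e1, e3]; linarith) (by rw [theta_wz]; linarith)
  · exact key wz w3 CU_wz CU_w3 (by rw [theta_wz]; linarith) (by rw [theta_w3, e0, e1, e2, e3]; linarith)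
  · exact key wz w1 CU_wz CU_w1 (by rw [theta_wz]; linarith) (by rw [theta_w1, e0, e2]; linarith)
  · exact key wz w2 CU_wz CU_w2 (by rw [theta_wz]; linarith) (by rw [theta_w2, e1, e3]; linarith)
  · exact key wz wz CU_wz CU_wz (by rw [theta_wz]; linarith) (by rw [theta_wz]; linarith)

/-! ### The networks witnessing principality -/

/-- The one-node network: all four io arcs on a single node, capacities `[0,1]`. -/
def NTex : Network (Fin 4) isIn4ex where
  V := PUnit
  E := Empty
  src := fun e => e.elim
  tgt := fun e => e.elim
  ioNode := fun _ => PUnit.unit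
  lcE := fun e => e.elim
  ucE := fun e => e.elim
  lcIO := fun _ => 0
  ucIO := fun _ => 1
  lcE_nonneg := fun e => e.elim
  lcE_le_ucE := fun e => e.elim
  lcIO_nonneg := fun _ => le_refl 0
  lcIO_le_ucIO := fun _ => zero_le_one

/-- The two-node network: arcs `0, 2` on one node, arcs `1, 3` on the other. -/
def NUex : Network (Fin 4) isIn4ex where
  V := Bool
  E := Empty
  src := fun e => e.elim
  tgt := fun e => e.elim
  ioNode := fun a => decide (a = 1 ∨ a = 3)
  lcE := fun e => e.elim
  ucE := fun e => e.elim
  lcIO := fun _ => 0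
  ucIO := fun _ => 1
  lcE_nonneg := fun e => e.elim
  lcE_le_ucE := fun e => e.elim
  lcIO_nonneg := fun _ => le_refl 0
  lcIO_le_ucIO := fun _ => zero_le_one

lemma sound_NTex : Sound NTex Tex := by
  intro f hf
  obtain ⟨hbox, hbal⟩ := CT_of_satTex hf
  refine ⟨fun e => e.elim, fun a => ⟨(hbox a).1, (hbox a).2⟩, fun e => e.elim, fun v => ?_⟩
  cases v
  simp only [NTex]
  rw [Fin.sum_univ_four, Fin.sum_univ_four]
  norm_num (config := { decide := true }) [isIn4ex, Finset.univ_eq_empty]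
  linarith [hbal]

lemma complete_NTex : Complete NTex Tex := by
  intro f g hfg
  obtain ⟨hio, -, hcons⟩ := hfg
  have h := hcons PUnit.unit
  simp only [NTex] at h
  rw [Fin.sum_univ_four, Fin.sum_univ_four] at h
  norm_num (config := { decide := true }) [isIn4ex, Finset.univ_eq_empty] at h
  exact satTex_of_CT ⟨fun a => hio a, by linarith [h]⟩

lemma sound_NUex : Sound NUex Uex := by
  intro f hf
  obtain ⟨hbox, h02, h13⟩ := CU_of_satUex hf
  refine ⟨fun e => e.elim, fun a => ⟨(hbox a).1, (hbox a).2⟩, fun e => e.elim, fun v => ?_⟩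
  cases v <;>
  · haveI : IsEmpty NUex.E := ⟨fun e => Empty.elim e⟩
    simp only [Fintype.sum_empty, zero_add]
    simp only [NUex]
    rw [Fin.sum_univ_four, Fin.sum_univ_four]
    norm_num (config := { decide := true }) [isIn4ex, Finset.univ_eq_empty]
    linarith [h02, h13]

lemma complete_NUex : Complete NUex Uex := by
  intro f g hfg
  obtain ⟨hio, -, hcons⟩ := hfg
  have hF := hcons false
  have hT := hcons true
  haveI : IsEmpty NUex.E := ⟨fun e => Empty.elim e⟩
  simp only [Fintype.sum_empty, zero_add] at hF hT
  simp only [NUex] at hF hT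
  rw [Fin.sum_univ_four, Fin.sum_univ_four] at hF hT
  norm_num (config := { decide := true }) [isIn4ex, Finset.univ_eq_empty] at hF hT
  exact satUex_of_CU ⟨fun a => hio a, by linarith [hF], by linarith [hT]⟩

/-! ### Principality of the example typings -/

lemma wf_Tex : WF Tex := by
  intro A r s hA
  simp only [Tex, Option.some.injEq, Prod.mk.injEq] at hA
  obtain ⟨rfl, rfl⟩ := hA
  rcases indR_cases A 0 with e0 | e0 <;> rcases indR_cases A 1 with e1 | e1 <;>
    rcases indR_cases A 2 with e2 | e2 <;> rcases indR_cases A 3 with e3 | e3 <;>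
    rw [e0, e1, e2, e3] <;> norm_num

lemma wf_Uex : WF Uex := by
  intro A r s hA
  simp only [Uex, Option.some.injEq, Prod.mk.injEq] at hA
  obtain ⟨rfl, rfl⟩ := hA
  rcases indR_cases A 0 with e0 | e0 <;> rcases indR_cases A 1 with e1 | e1 <;>
    rcases indR_cases A 2 with e2 | e2 <;> rcases indR_cases A 3 with e3 | e3 <;>
    rw [e0, e1, e2, e3] <;> norm_num

lemma principal_Tex : IsPrincipal isIn4ex Tex :=
  ⟨wf_Tex, fun _ => rfl, tight_Tex, NTex, sound_NTex, complete_NTex⟩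

lemma principal_Uex : IsPrincipal isIn4ex Uex :=
  ⟨wf_Uex, fun _ => rfl, tight_Uex, NUex, sound_NUex, complete_NUex⟩

lemma subT_Tex_Uex : SubT isIn4ex Tex Uex := by
  intro f hf
  have h := CU_of_satUex hf
  exact satTex_of_CT ⟨h.1, by rw [h.2.1, h.2.2]⟩

/-- The separating assignment: one unit flows in on arc `0` and out on arc `3`. -/
def gex : Fin 4 → ℝ := ![1, 0, 0, 1]

lemma gex_sat_restrict :
    Satisfies isIn4ex (restrictTo (inputs isIn4ex) Uex) gex := by
  refine ⟨fun a => by fin_cases a <;> norm_num [gex, Matrix.cons_val_two, Matrix.cons_val_three], fun A r s hA => ?_⟩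
  rw [restrictTo] at hA
  by_cases hAP : A ⊆ inputs isIn4ex
  · rw [if_pos hAP] at hA
    have h2 : (2 : Fin 4) ∉ A := fun hmem => absurd (hAP hmem) (by decide)
    have h3 : (3 : Fin 4) ∉ A := fun hmem => absurd (hAP hmem) (by decide)
    simp only [Uex, Option.some.injEq, Prod.mk.injEq] at hA
    obtain ⟨rfl, rfl⟩ := hA
    have e2 : indR A 2 = 0 := by rw [indR, if_neg h2]
    have e3 : indR A 3 = 0 := by rw [indR, if_neg h3]
    rw [theta_ex, e2, e3]
    norm_num [gex, Matrix.cons_val_two, Matrix.cons_val_three]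
    rcases indR_cases A 0 with e0 | e0 <;> rcases indR_cases A 1 with e1 | e1 <;>
      rw [e0, e1] <;> norm_num
  · rw [if_neg hAP] at hA; cases hA

lemma gex_sat_Tex : Satisfies isIn4ex Tex gex :=
  satTex_of_CT ⟨fun a => by fin_cases a <;> norm_num [gex, Matrix.cons_val_two, Matrix.cons_val_three], by norm_num [gex, Matrix.cons_val_two, Matrix.cons_val_three]⟩

lemma gex_not_sat_Uex : ¬ Satisfies isIn4ex Uex gex := by
  intro h
  have hk := h.2 {0, 2} 0 0 (by norm_num (config := { decide := true }) [Uex, indR])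
  rw [theta_ex] at hk
  norm_num (config := { decide := true }) [indR, gex, Matrix.cons_val_two, Matrix.cons_val_three] at hk

lemma not_strong_Tex_Uex : ¬ StrongSubT isIn4ex Tex Uex := by
  intro hstrong
  exact gex_not_sat_Uex ((hstrong.1 gex gex_sat_restrict).mpr gex_sat_Tex)

/-- Strong subtyping of principal typings over a common arc set
is a partial order refining subtyping: reflexive, antisymmetric, transitive, and
`T ≪: U → T <: U`, while the converse fails in general. -/
theorem strongSubT_partialOrder (isIn : ι → Bool) :
    (∀ T : Typing ι, IsPrincipal isIn T → StrongSubT isIn T T) ∧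
    (∀ T U : Typing ι, IsPrincipal isIn T → IsPrincipal isIn U →
      StrongSubT isIn T U → StrongSubT isIn U T → T = U) ∧
    (∀ S T U : Typing ι, IsPrincipal isIn S → IsPrincipal isIn T →
      IsPrincipal isIn U → StrongSubT isIn S T → StrongSubT isIn T U →
      StrongSubT isIn S U) ∧
    (∀ T U : Typing ι, IsPrincipal isIn T → IsPrincipal isIn U →
      StrongSubT isIn T U → SubT isIn T U) ∧
    (∃ (isIn4 : Fin 4 → Bool) (T U : Typing (Fin 4)),
      IsPrincipal isIn4 T ∧ IsPrincipal isIn4 U ∧ SubT isIn4 T U ∧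
        ¬ StrongSubT isIn4 T U) := by
  refine ⟨?_, ?_, ?_, ?_, ?_⟩
  · -- reflexivity
    intro T _
    exact ⟨fun g _ => Iff.rfl, fun g _ => Iff.rfl⟩
  · -- antisymmetry
    intro T U hT hU hTU hUT
    have h1 : Poly isIn U ⊆ Poly isIn T := subT_of_strongSubT hTU
    have h2 : Poly isIn T ⊆ Poly isIn U := subT_of_strongSubT hUT
    funext A
    obtain ⟨⟨rT, sT⟩, hTA⟩ := Option.isSome_iff_exists.mp (hT.2.1 A)
    obtain ⟨⟨rU, sU⟩, hUA⟩ := Option.isSome_iff_exists.mp (hU.2.1 A)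
    obtain ⟨fTr, hfTr, hθTr⟩ :=
      hT.2.2.1 A rT sT hTA rT le_rfl (hT.1 A rT sT hTA)
    obtain ⟨fTs, hfTs, hθTs⟩ :=
      hT.2.2.1 A rT sT hTA sT (hT.1 A rT sT hTA) le_rfl
    obtain ⟨fUr, hfUr, hθUr⟩ :=
      hU.2.2.1 A rU sU hUA rU le_rfl (hU.1 A rU sU hUA)
    obtain ⟨fUs, hfUs, hθUs⟩ :=
      hU.2.2.1 A rU sU hUA sU (hU.1 A rU sU hUA) le_rfl
    have b1 := (h2 hfTr).2 A rU sU hUA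
    have b2 := (h2 hfTs).2 A rU sU hUA
    have b3 := (h1 hfUr).2 A rT sT hTA
    have b4 := (h1 hfUs).2 A rT sT hTA
    rw [hθTr] at b1; rw [hθTs] at b2; rw [hθUr] at b3; rw [hθUs] at b4
    have hr : rT = rU := le_antisymm b3.1 b1.1
    have hs : sT = sU := le_antisymm b2.2 b4.2
    rw [hTA, hUA, hr, hs]
  · -- transitivity
    intro S T U hS hT hU hST hTU
    have hPolyUT : Poly isIn U ⊆ Poly isIn T := subT_of_strongSubT hTU
    constructor
    · intro g hg
      have hg' := sat_restrict_of_poly_subset hU.2.2.1 hU.2.1 hPolyUT _ g hg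
      exact (hTU.1 g hg).trans (hST.1 g hg')
    · intro g hg
      have hg' := sat_restrict_of_poly_subset hU.2.2.1 hU.2.1 hPolyUT _ g hg
      exact (hTU.2 g hg).trans (hST.2 g hg')
  · -- strong subtyping implies subtyping
    intro T U _ _ h
    exact subT_of_strongSubT h
  · -- the converse fails in general
    exact ⟨isIn4ex, Tex, Uex, principal_Tex, principal_Uex, subT_Tex_Uex,
      not_strong_Tex_Uex⟩

end
end FlowTyping
end
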